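/- For every finite group G, there exists a finite group H isoclinic to G such that |H| ≤ |G| and Z(H) ⊆ [H,H]. -/

import Mathlib

open scoped commutatorElement

/-- A finite group is supersolvable if it has a chain of subgroups, each normal in the
whole group, from the trivial subgroup to the whole group, with cyclic successive quotients. -/
def IsSupersolvable (G : Type*) [Group G] : Prop :=
  ∃ (n : ℕ) (s : Fin (n + 1) → Subgroup G) (hnorm : ∀ i, (s i).Normal),
    s 0 = ⊥ ∧ s (Fin.last n) = ⊤ ∧ Monotone s ∧
    ∀ i : Fin n,
      IsCyclic ((s i.succ).map (@QuotientGroup.mk' G _ (s i.castSucc) (hnorm i.castSucc)))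

theorem commutator_element_mem_commutator {G : Type*} [Group G] (g₁ g₂ : G) :
    ⁅g₁, g₂⁆ ∈ commutator G :=
  Subgroup.commutator_mem_commutator (Subgroup.mem_top g₁) (Subgroup.mem_top g₂)

/-- Two groups are isoclinic if there are compatible isomorphisms between their central
quotients and their commutator subgroups. -/
def Isoclinic (G H : Type*) [Group G] [Group H] : Prop :=
  ∃ (φ : G ⧸ Subgroup.center G ≃* H ⧸ Subgroup.center H)
    (ψ : commutator G ≃* commutator H),
    ∀ (g₁ g₂ : G) (h₁ h₂ : H),
      φ (g₁ : G ⧸ Subgroup.center G) = (h₁ : H ⧸ Subgroup.center H) →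
      φ (g₂ : G ⧸ Subgroup.center G) = (h₂ : H ⧸ Subgroup.center H) →
      (ψ ⟨⁅g₁, g₂⁆, commutator_element_mem_commutator g₁ g₂⟩ : H) = ⁅h₁, h₂⁆

open Subgroup
namespace StemAux
variable (G : Type) [Group G] [Finite G]
noncomputable instance : Fintype G := Fintype.ofFinite G
abbrev Atil : Type := G → Multiplicative ℤ
noncomputable def theta : Atil G →* Abelianization G :=
  MonoidHom.noncommPiCoprod (fun g => zpowersHom _ (Abelianization.of g))
    (fun _ _ _ _ _ => Commute.all _ _)
noncomputable def eps : G × Atil G →* Abelianization G :=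
  (Abelianization.of.comp (MonoidHom.fst G (Atil G))) /
    ((theta G).comp (MonoidHom.snd G (Atil G)))
noncomputable def E : Subgroup (G × Atil G) := MonoidHom.ker (eps G)
lemma mem_E_iff (x : G × Atil G) : x ∈ E G ↔ Abelianization.of x.1 = theta G x.2 := by
  simp [E, eps, MonoidHom.mem_ker, div_eq_one]
noncomputable def pi1 : ↥(E G) →* G := (MonoidHom.fst G (Atil G)).comp (E G).subtype
noncomputable def pi2 : ↥(E G) →* Atil G := (MonoidHom.snd G (Atil G)).comp (E G).subtype
lemma pi1_surj : Function.Surjective (pi1 G) := by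
  classical
  intro g
  refine ⟨⟨(g, Pi.mulSingle g (Multiplicative.ofAdd 1)), ?_⟩, rfl⟩
  rw [mem_E_iff]
  simp [theta]
  refine Eq.trans ?_ (MonoidHom.noncommPiCoprod_mulSingle (fun g => zpowersHom _ (Abelianization.of g)) g (Multiplicative.ofAdd (1 : ℤ))).symm
  simp

-- stage 2
noncomputable def C : Subgroup ↥(E G) := (Subgroup.center G).comap (pi1 G)

lemma C_eq_center : C G = Subgroup.center ↥(E G) := by
  ext x
  constructor
  · intro hx
    rw [Subgroup.mem_center_iff]
    intro y
    have hx1 : x.1.1 ∈ Subgroup.center G := hx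
    ext
    · exact (Subgroup.mem_center_iff.mp hx1 y.1.1)
    · exact congrArg Multiplicative.toAdd (congrFun (mul_comm y.1.2 x.1.2) _)
  · intro hx
    have : x.1.1 ∈ Subgroup.center G := by
      rw [Subgroup.mem_center_iff]
      intro g
      obtain ⟨y, hy⟩ := pi1_surj G g
      have := Subgroup.mem_center_iff.mp hx y
      have := congrArg (fun z : ↥(E G) => z.1.1) this
      simpa [← hy, pi1] using this
    exact this

lemma C_le_center : C G ≤ Subgroup.center ↥(E G) := (C_eq_center G).le

noncomputable def D0 : Subgroup ↥(E G) := C G ⊓ MonoidHom.ker (pi2 G)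

lemma commutator_le_ker_pi2 : commutator ↥(E G) ≤ MonoidHom.ker (pi2 G) :=
  Abelianization.commutator_subset_ker (pi2 G)

lemma map_pi1_commutator : Subgroup.map (pi1 G) (commutator ↥(E G)) = commutator G := by
  rw [commutator_def, Subgroup.map_commutator, Subgroup.map_top_of_surjective _ (pi1_surj G),
    commutator_def]

lemma mem_commutatorE_iff (x : ↥(E G)) :
    x ∈ commutator ↥(E G) ↔ pi1 G x ∈ commutator G ∧ pi2 G x = 1 := by
  constructor
  · intro hx
    exact ⟨by rw [← map_pi1_commutator]; exact Subgroup.mem_map_of_mem _ hx,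
      commutator_le_ker_pi2 G hx⟩
  · rintro ⟨h1, h2⟩
    rw [← map_pi1_commutator] at h1
    obtain ⟨y, hy, hyx⟩ := h1
    have hy2 : pi2 G y = 1 := commutator_le_ker_pi2 G hy
    have : y = x := Subtype.ext (Prod.ext hyx (hy2.trans h2.symm))
    exact this ▸ hy

lemma D0_le_commutatorE : D0 G ≤ commutator ↥(E G) := by
  intro x hx
  obtain ⟨hc, hk⟩ := hx
  rw [mem_commutatorE_iff]
  refine ⟨?_, hk⟩
  have hx2 : x.1.2 = 1 := hk
  have := (mem_E_iff G x.1).mp x.2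
  rw [hx2, map_one] at this
  exact (QuotientGroup.eq_one_iff _).mp this

-- stage 3 : existence of the complement S
lemma exists_S : ∃ S : Subgroup ↥(E G),
    S ≤ C G ∧ S ⊓ MonoidHom.ker (pi2 G) = ⊥ ∧ C G ≤ S ⊔ D0 G := by
  classical
  letI : CommGroup ↥(C G) :=
    { (inferInstance : Group ↥(C G)) with
      mul_comm := fun a b => Subtype.ext
        ((Subgroup.mem_center_iff.mp (C_le_center G a.2) b.1).symm) }
  set ρ : ↥(C G) →* Atil G := (pi2 G).comp (C G).subtype with hρ
  set ρL : Additive ↥(C G) →ₗ[ℤ] Additive (Atil G) :=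
    (MonoidHom.toAdditive ρ).toIntLinearMap with hρL
  -- a linear equiv between Additive (Atil G) and (G → ℤ)
  let e : (G → ℤ) ≃+ Additive (Atil G) :=
    { toFun := fun f => Additive.ofMul (fun g => Multiplicative.ofAdd (f g))
      invFun := fun x g => Multiplicative.toAdd (Additive.toMul x g)
      left_inv := fun f => rfl
      right_inv := fun x => rfl
      map_add' := fun f₁ f₂ => rfl }
  let b : Module.Basis G ℤ (Additive (Atil G)) := (Pi.basisFun ℤ G).map e.toIntLinearEquiv
  set P : Submodule ℤ (Additive (Atil G)) := LinearMap.range ρL with hP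
  obtain ⟨n, bP⟩ := Submodule.basisOfPid b P
  letI : Module.Free ℤ ↥P := Module.Free.of_basis bP
  obtain ⟨σ, hσ⟩ := Module.projective_lifting_property ρL.rangeRestrict
    (LinearMap.id) (LinearMap.surjective_rangeRestrict ρL)
  have hσ' : ∀ p : ↥P, ρL (σ p) = (p : Additive (Atil G)) := by
    intro p
    have := LinearMap.congr_fun hσ p
    exact congrArg (Subtype.val) this
  let s : ↥P → ↥(E G) := fun p => ((Additive.toMul (σ p) : ↥(C G)) : ↥(E G))
  have hs_mul : ∀ p q, s (p + q) = s p * s q := by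
    intro p q
    simp only [s, map_add]
    rfl
  have hs_pi2 : ∀ p, pi2 G (s p) = Additive.toMul (p : Additive (Atil G)) := by
    intro p
    have := hσ' p
    have : Additive.toMul (ρL (σ p)) = Additive.toMul (p : Additive (Atil G)) :=
      congrArg Additive.toMul this
    exact this
  have hs_one : s 0 = 1 := by
    simp only [s, map_zero]
    rfl
  let S : Subgroup ↥(E G) :=
    { carrier := Set.range s
      one_mem' := ⟨0, hs_one⟩
      mul_mem' := by rintro a b ⟨p, rfl⟩ ⟨q, rfl⟩; exact ⟨p + q, hs_mul p q⟩
      inv_mem' := by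
        rintro a ⟨p, rfl⟩
        refine ⟨-p, ?_⟩
        have := hs_mul (-p) p
        rw [neg_add_cancel, hs_one] at this
        exact (eq_inv_of_mul_eq_one_left this.symm) }
  have hmemS : ∀ p : ↥P, s p ∈ S := fun p => ⟨p, rfl⟩
  refine ⟨S, ?_, ?_, ?_⟩
  · rintro x ⟨p, rfl⟩
    exact SetLike.coe_mem _
  · rw [eq_bot_iff]
    rintro x ⟨⟨p, rfl⟩, (hk : pi2 G (s p) = 1)⟩
    rw [hs_pi2] at hk
    have hp0 : (p : Additive (Atil G)) = 0 := by simpa using hk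
    have : p = 0 := Subtype.ext hp0
    rw [this, hs_one]
    rfl
  · intro x hx
    let xc : ↥(C G) := ⟨x, hx⟩
    let p : ↥P := ⟨ρL (Additive.ofMul xc), LinearMap.mem_range_self _ _⟩
    have hple : pi2 G (s p) = pi2 G x := by
      rw [hs_pi2]
      rfl
    have hd : x * (s p)⁻¹ ∈ D0 G := by
      refine Subgroup.mem_inf.mpr ⟨?_, ?_⟩
      · exact mul_mem hx (inv_mem (SetLike.coe_mem (Additive.toMul (σ p) : ↥(C G))))
      · show pi2 G (x * (s p)⁻¹) = 1
        rw [map_mul, map_inv, hple, mul_inv_cancel]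
    have : x = (x * (s p)⁻¹) * s p := by group
    rw [this]
    exact mul_mem (Subgroup.mem_sup_right hd) (Subgroup.mem_sup_left (hmemS p))

-- stage 4: generic central-commutator lemmas
lemma center_conj_push {Γ : Type*} [Group Γ] {z : Γ} (hz : z ∈ Subgroup.center Γ) (c X : Γ) :
    z * (c * (z⁻¹ * X)) = c * X := by
  have h : c * z = z * c := Subgroup.mem_center_iff.mp hz c
  rw [← mul_assoc, ← h, mul_assoc, mul_inv_cancel_left]

lemma center_swap {Γ : Type*} [Group Γ] {w : Γ} (hw : w ∈ Subgroup.center Γ) (c X : Γ) :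
    w * (c * X) = c * (w * X) := by
  have h : c * w = w * c := Subgroup.mem_center_iff.mp hw c
  rw [← mul_assoc, ← h, mul_assoc]

lemma commutator_mul_center {Γ : Type*} [Group Γ] {z w : Γ}
    (hz : z ∈ Subgroup.center Γ) (hw : w ∈ Subgroup.center Γ) (a b : Γ) :
    ⁅a * z, b * w⁆ = ⁅a, b⁆ := by
  simp only [commutatorElement_def, mul_inv_rev, mul_assoc]
  rw [center_swap hw, center_conj_push hz, center_swap hw, mul_inv_cancel_left]

-- stage 5: properties of the quotient
section Quot

variable (S : Subgroup ↥(E G))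

lemma S_normal (hS1 : S ≤ C G) : S.Normal := by
  constructor
  intro n hn g
  have h : g * n = n * g := Subgroup.mem_center_iff.mp (C_le_center G (hS1 hn)) g
  rw [h, mul_assoc, mul_inv_cancel, mul_one]
  exact hn

lemma S_comm_triv (hS2 : S ⊓ MonoidHom.ker (pi2 G) = ⊥) : ∀ x : ↥(E G), x ∈ commutator ↥(E G) → x ∈ S → x = 1 := by
  intro x hc hs
  have : x ∈ S ⊓ MonoidHom.ker (pi2 G) := ⟨hs, commutator_le_ker_pi2 G hc⟩
  rw [hS2] at this
  exact this

lemma center_quot (hS2 : S ⊓ MonoidHom.ker (pi2 G) = ⊥) [S.Normal] :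
    Subgroup.center (↥(E G) ⧸ S) = Subgroup.map (QuotientGroup.mk' S) (C G) := by
  ext xb
  constructor
  · intro hx
    obtain ⟨x, rfl⟩ := QuotientGroup.mk'_surjective S xb
    refine Subgroup.mem_map_of_mem _ ?_
    rw [C_eq_center, Subgroup.mem_center_iff]
    intro y
    have h1 : (QuotientGroup.mk' S) ⁅y, x⁆ = 1 := by
      rw [map_commutatorElement]
      exact commutatorElement_eq_one_iff_mul_comm.mpr
        (Subgroup.mem_center_iff.mp hx _)
    have h2 : ⁅y, x⁆ ∈ S := by rwa [← QuotientGroup.ker_mk' S, MonoidHom.mem_ker] at *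
    have h3 : ⁅y, x⁆ = (1 : ↥(E G)) :=
      S_comm_triv G S hS2 _ (Subgroup.commutator_mem_commutator (Subgroup.mem_top y) (Subgroup.mem_top x)) h2
    exact commutatorElement_eq_one_iff_mul_comm.mp h3
  · rintro ⟨x, hx, rfl⟩
    rw [Subgroup.mem_center_iff]
    intro yb
    obtain ⟨y, rfl⟩ := QuotientGroup.mk'_surjective S yb
    rw [← map_mul, ← map_mul, Subgroup.mem_center_iff.mp (C_le_center G hx) y]

lemma commutator_quot [S.Normal] :
    commutator (↥(E G) ⧸ S) = Subgroup.map (QuotientGroup.mk' S) (commutator ↥(E G)) := by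
  rw [commutator_def, commutator_def, Subgroup.map_commutator,
    Subgroup.map_top_of_surjective _ (QuotientGroup.mk'_surjective S)]

lemma map_S_bot [S.Normal] : Subgroup.map (QuotientGroup.mk' S) S = ⊥ := by
  rw [eq_bot_iff]
  rintro xb ⟨x, hx, rfl⟩
  simp only [Subgroup.mem_bot]
  rwa [← MonoidHom.mem_ker, QuotientGroup.ker_mk']

end Quot
end StemAux


theorem exists_isoclinic_stem_group (G : Type) [Group G] [Finite G] :
    ∃ (H : Type) (_ : Group H) (_ : Finite H),
      Isoclinic G H ∧ Nat.card H ≤ Nat.card G ∧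
        Subgroup.center H ≤ commutator H := by
  classical
  obtain ⟨S, hS1, hS2, hS3⟩ := StemAux.exists_S G
  haveI hN : S.Normal := StemAux.S_normal G S hS1
  let H := ↥(StemAux.E G) ⧸ S
  let mkS : ↥(StemAux.E G) →* H := QuotientGroup.mk' S
  have mkS_surj : Function.Surjective mkS := QuotientGroup.mk'_surjective S
  have hcenterH : Subgroup.center H = Subgroup.map mkS (StemAux.C G) :=
    StemAux.center_quot G S hS2
  have hcommH : commutator H = Subgroup.map mkS (commutator ↥(StemAux.E G)) :=
    StemAux.commutator_quot G S
  -- the equivalence φ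
  let f₁ : ↥(StemAux.E G) →* G ⧸ Subgroup.center G :=
    (QuotientGroup.mk' (Subgroup.center G)).comp (StemAux.pi1 G)
  have hf₁ : Function.Surjective f₁ :=
    (QuotientGroup.mk'_surjective _).comp (StemAux.pi1_surj G)
  let f₂ : ↥(StemAux.E G) →* H ⧸ Subgroup.center H :=
    (QuotientGroup.mk' (Subgroup.center H)).comp mkS
  have hf₂ : Function.Surjective f₂ :=
    (QuotientGroup.mk'_surjective _).comp mkS_surj
  have hker₁ : MonoidHom.ker f₁ = StemAux.C G := by
    ext x
    rw [MonoidHom.mem_ker]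
    show QuotientGroup.mk' _ (StemAux.pi1 G x) = 1 ↔ _
    rw [QuotientGroup.mk'_apply, QuotientGroup.eq_one_iff]
    rfl
  have hker₂ : MonoidHom.ker f₂ = StemAux.C G := by
    have h : MonoidHom.ker f₂ = Subgroup.comap mkS (Subgroup.center H) := by
      ext x
      rw [MonoidHom.mem_ker]
      show QuotientGroup.mk' _ (mkS x) = 1 ↔ _
      rw [QuotientGroup.mk'_apply, QuotientGroup.eq_one_iff]
      rfl
    rw [h, hcenterH, Subgroup.comap_map_eq, QuotientGroup.ker_mk', sup_eq_left.mpr hS1]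
  have hkk : MonoidHom.ker f₁ = MonoidHom.ker f₂ := by rw [hker₁, hker₂]
  let e₁ := QuotientGroup.quotientKerEquivOfSurjective f₁ hf₁
  let e₂ := QuotientGroup.quotientKerEquivOfSurjective f₂ hf₂
  let φ : G ⧸ Subgroup.center G ≃* H ⧸ Subgroup.center H :=
    (e₁.symm.trans (QuotientGroup.quotientMulEquivOfEq hkk)).trans e₂
  have hφ : ∀ x : ↥(StemAux.E G), φ (f₁ x) = f₂ x := by
    intro x
    have h1 : e₁ (QuotientGroup.mk x) = f₁ x := rfl
    have h2 : e₂ (QuotientGroup.mk x) = f₂ x := rfl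
    have h3 : e₁.symm (f₁ x) = QuotientGroup.mk x := by
      rw [← h1, MulEquiv.symm_apply_apply]
    show e₂ (QuotientGroup.quotientMulEquivOfEq hkk (e₁.symm (f₁ x))) = f₂ x
    rw [h3, QuotientGroup.quotientMulEquivOfEq_mk, h2]
  -- the equivalence ψ
  have hKmap : Subgroup.map (StemAux.pi1 G) (commutator ↥(StemAux.E G)) = commutator G :=
    StemAux.map_pi1_commutator G
  let u : ↥(commutator ↥(StemAux.E G)) →* ↥(commutator H) :=
    (mkS.comp (commutator ↥(StemAux.E G)).subtype).codRestrict _ (fun x => by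
      rw [hcommH]
      exact Subgroup.mem_map_of_mem _ x.2)
  have hu : Function.Bijective u := by
    constructor
    · rw [injective_iff_map_eq_one]
      intro x hx
      have h0 : mkS x.1 = 1 := congrArg Subtype.val hx
      have hxS : (x : ↥(StemAux.E G)) ∈ S := by
        rwa [← QuotientGroup.ker_mk' S, MonoidHom.mem_ker]
      exact Subtype.ext (StemAux.S_comm_triv G S hS2 _ x.2 hxS)
    · rintro ⟨y, hy⟩
      rw [hcommH] at hy
      obtain ⟨x, hx, rfl⟩ := hy
      exact ⟨⟨x, hx⟩, rfl⟩
  let v : ↥(commutator ↥(StemAux.E G)) →* ↥(commutator G) :=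
    ((StemAux.pi1 G).comp (commutator ↥(StemAux.E G)).subtype).codRestrict _ (fun x => by
      rw [← hKmap]
      exact Subgroup.mem_map_of_mem _ x.2)
  have hv : Function.Bijective v := by
    constructor
    · rw [injective_iff_map_eq_one]
      intro x hx
      have h1 : StemAux.pi1 G x.1 = 1 := congrArg Subtype.val hx
      have h2 : StemAux.pi2 G x.1 = 1 := StemAux.commutator_le_ker_pi2 G x.2
      exact Subtype.ext (Subtype.ext (Prod.ext h1 h2))
    · rintro ⟨y, hy⟩
      rw [← hKmap] at hy
      obtain ⟨x, hx, rfl⟩ := hy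
      exact ⟨⟨x, hx⟩, rfl⟩
  let ψ : ↥(commutator G) ≃* ↥(commutator H) :=
    (MulEquiv.ofBijective v hv).symm.trans (MulEquiv.ofBijective u hu)
  have hψ : ∀ (x : ↥(commutator ↥(StemAux.E G))) (h : StemAux.pi1 G x.1 ∈ commutator G),
      (ψ ⟨StemAux.pi1 G x.1, h⟩ : H) = mkS x.1 := by
    intro x h
    have hvx : (MulEquiv.ofBijective v hv) x = ⟨StemAux.pi1 G x.1, h⟩ := Subtype.ext rfl
    have hsx : (MulEquiv.ofBijective v hv).symm ⟨StemAux.pi1 G x.1, h⟩ = x := by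
      rw [← hvx, MulEquiv.symm_apply_apply]
    show ((MulEquiv.ofBijective u hu) ((MulEquiv.ofBijective v hv).symm ⟨_, h⟩) : H) = mkS x.1
    rw [hsx]
    rfl
  -- compatibility
  have compat : ∀ (g₁ g₂ : G) (h₁ h₂ : H),
      φ (g₁ : G ⧸ Subgroup.center G) = (h₁ : H ⧸ Subgroup.center H) →
      φ (g₂ : G ⧸ Subgroup.center G) = (h₂ : H ⧸ Subgroup.center H) →
      (ψ ⟨⁅g₁, g₂⁆, commutator_element_mem_commutator g₁ g₂⟩ : H) = ⁅h₁, h₂⁆ := by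
    intro g₁ g₂ h₁ h₂ hy₁ hy₂
    obtain ⟨x₁, hx₁⟩ := StemAux.pi1_surj G g₁
    obtain ⟨x₂, hx₂⟩ := StemAux.pi1_surj G g₂
    have ef₁ : f₁ x₁ = (g₁ : G ⧸ Subgroup.center G) := by
      show QuotientGroup.mk' _ (StemAux.pi1 G x₁) = _
      rw [hx₁]
      rfl
    have ef₂ : f₁ x₂ = (g₂ : G ⧸ Subgroup.center G) := by
      show QuotientGroup.mk' _ (StemAux.pi1 G x₂) = _
      rw [hx₂]
      rfl
    have hq₁ : ((mkS x₁ : H) : H ⧸ Subgroup.center H) = (h₁ : H ⧸ Subgroup.center H) := by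
      have h := hφ x₁
      rw [ef₁, hy₁] at h
      exact h.symm
    have hq₂ : ((mkS x₂ : H) : H ⧸ Subgroup.center H) = (h₂ : H ⧸ Subgroup.center H) := by
      have h := hφ x₂
      rw [ef₂, hy₂] at h
      exact h.symm
    have hz₁ : (mkS x₁)⁻¹ * h₁ ∈ Subgroup.center H := by
      rw [← QuotientGroup.eq]
      exact hq₁
    have hz₂ : (mkS x₂)⁻¹ * h₂ ∈ Subgroup.center H := by
      rw [← QuotientGroup.eq]
      exact hq₂
    have hh₁ : h₁ = mkS x₁ * ((mkS x₁)⁻¹ * h₁) := by rw [mul_inv_cancel_left]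
    have hh₂ : h₂ = mkS x₂ * ((mkS x₂)⁻¹ * h₂) := by rw [mul_inv_cancel_left]
    have hcm : ⁅h₁, h₂⁆ = ⁅mkS x₁, mkS x₂⁆ := by
      conv_lhs => rw [hh₁, hh₂]
      exact StemAux.commutator_mul_center hz₁ hz₂ _ _
    have hm : ⁅x₁, x₂⁆ ∈ commutator ↥(StemAux.E G) :=
      Subgroup.commutator_mem_commutator (Subgroup.mem_top _) (Subgroup.mem_top _)
    have hp : StemAux.pi1 G ⁅x₁, x₂⁆ ∈ commutator G := by
      rw [map_commutatorElement, hx₁, hx₂]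
      exact commutator_element_mem_commutator g₁ g₂
    have heq : (⟨⁅g₁, g₂⁆, commutator_element_mem_commutator g₁ g₂⟩ : ↥(commutator G)) =
        ⟨StemAux.pi1 G ⁅x₁, x₂⁆, hp⟩ := by
      refine Subtype.ext ?_
      show ⁅g₁, g₂⁆ = StemAux.pi1 G ⁅x₁, x₂⁆
      rw [map_commutatorElement, hx₁, hx₂]
    rw [heq]
    have := hψ ⟨⁅x₁, x₂⁆, hm⟩ hp
    rw [this, hcm, map_commutatorElement]
  -- cardinality and finiteness
  have hCsup : StemAux.C G = S ⊔ StemAux.D0 G :=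
    le_antisymm hS3 (sup_le hS1 inf_le_left)
  have hcenterH2 : Subgroup.center H = Subgroup.map mkS (StemAux.D0 G) := by
    rw [hcenterH, hCsup, Subgroup.map_sup, StemAux.map_S_bot G S, bot_sup_eq]
  have hZle : Subgroup.center H ≤ commutator H := by
    rw [hcenterH2, hcommH]
    exact Subgroup.map_mono (StemAux.D0_le_commutatorE G)
  haveI : Finite ↥(StemAux.D0 G) := by
    refine Finite.of_injective (fun d : ↥(StemAux.D0 G) => (d.1.1.1 : G)) ?_
    intro a b hab
    refine Subtype.ext (Subtype.ext (Prod.ext hab ?_))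
    have ha : StemAux.pi2 G a.1 = 1 := (Subgroup.mem_inf.mp a.2).2
    have hb : StemAux.pi2 G b.1 = 1 := (Subgroup.mem_inf.mp b.2).2
    exact ha.trans hb.symm
  haveI : Finite ↥(Subgroup.center H) := by
    rw [hcenterH2]
    refine Finite.of_surjective
      (fun d : ↥(StemAux.D0 G) =>
        (⟨mkS d.1, Subgroup.mem_map_of_mem _ d.2⟩ : ↥(Subgroup.map mkS (StemAux.D0 G)))) ?_
    rintro ⟨y, x, hx, rfl⟩
    exact ⟨⟨x, hx⟩, rfl⟩
  haveI : Finite (G ⧸ Subgroup.center G) := Quotient.finite _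
  haveI : Finite (H ⧸ Subgroup.center H) := Finite.of_equiv _ φ.toEquiv
  haveI finH : Finite H :=
    Finite.of_equiv _ (Subgroup.groupEquivQuotientProdSubgroup (s := Subgroup.center H)).symm
  have hcard : Nat.card H ≤ Nat.card G := by
    have h1 : Nat.card H = Nat.card (H ⧸ Subgroup.center H) * Nat.card (Subgroup.center H) :=
      Subgroup.card_eq_card_quotient_mul_card_subgroup _
    have h2 : Nat.card G = Nat.card (G ⧸ Subgroup.center G) * Nat.card (Subgroup.center G) :=
      Subgroup.card_eq_card_quotient_mul_card_subgroup _
    have h3 : Nat.card (H ⧸ Subgroup.center H) = Nat.card (G ⧸ Subgroup.center G) :=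
      Nat.card_congr φ.toEquiv.symm
    have i1 : Nat.card ↥(Subgroup.center H) ≤ Nat.card ↥(StemAux.D0 G) := by
      rw [hcenterH2]
      refine Nat.card_le_card_of_surjective
        (fun d : ↥(StemAux.D0 G) =>
          (⟨mkS d.1, Subgroup.mem_map_of_mem _ d.2⟩ : ↥(Subgroup.map mkS (StemAux.D0 G)))) ?_
      rintro ⟨y, x, hx, rfl⟩
      exact ⟨⟨x, hx⟩, rfl⟩
    have i2 : Nat.card ↥(StemAux.D0 G) ≤ Nat.card ↥(Subgroup.center G) := by
      refine Nat.card_le_card_of_injective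
        (fun d : ↥(StemAux.D0 G) =>
          (⟨StemAux.pi1 G d.1, (Subgroup.mem_inf.mp d.2).1⟩ : ↥(Subgroup.center G))) ?_
      intro a b hab
      have h1' : StemAux.pi1 G a.1 = StemAux.pi1 G b.1 := congrArg Subtype.val hab
      refine Subtype.ext (Subtype.ext (Prod.ext h1' ?_))
      have ha : StemAux.pi2 G a.1 = 1 := (Subgroup.mem_inf.mp a.2).2
      have hb : StemAux.pi2 G b.1 = 1 := (Subgroup.mem_inf.mp b.2).2
      exact ha.trans hb.symm
    rw [h1, h2, h3]
    exact Nat.mul_le_mul le_rfl (i1.trans i2)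
  exact ⟨H, inferInstance, finH, ⟨φ, ψ, compat⟩, hcard, hZle⟩
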